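/- Let X be a set, H a Hilbert space, and a a bounded operator on ℓ²(X) ⊗ H. For every ε > 0 there exist isometries V, W : ℓ²(X) → ℓ²(X) ⊗ H such that for every x ∈ X, V δ_x and W δ_x lie in ℂδ_x ⊗ H, and (1 − ε)‖a‖ ≤ ‖W* a V‖ ≤ ‖a‖. -/

import Mathlib

/- ℓ²(X, H) is modeled as `lp (fun _ : X => H) 2`; `delta x` is the standard
basis vector δ_x of ℓ²(X) = ℓ²(X, ℂ); `projSet s` is the orthogonal projection
of ℓ²(X, H) onto the coordinates in the finite set `s` (for a ball `N(x,S)` this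
is the projection `P_x` onto ℓ²(N(x,S))).  The matrix coefficient
a_{y,z} = ⟨a δ_z, δ_y⟩ (linear in the first variable, as in the paper) is
`⟪delta y, a (delta z)⟫_ℂ` in Mathlib's convention (conjugate-linear in the
first slot), and the mathematicians' inner product ⟨u, v⟩ is `⟪v, u⟫_ℂ`. -/

noncomputable section
open scoped InnerProductSpace ComplexOrder ENNReal

attribute [local instance] Classical.propDecidable

abbrev l2 (X : Type*) (H : Type*) [NormedAddCommGroup H] [InnerProductSpace ℂ H] :
    Type _ := lp (fun _ : X => H) 2

variable {X : Type*} {H : Type*} [NormedAddCommGroup H] [InnerProductSpace ℂ H]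

/-- standard basis vector δ_x of ℓ²(X). -/
def delta (x : X) : l2 X ℂ := lp.single 2 x 1

/-- evaluation at a point, as a continuous linear map ℓ²(X,H) → H. -/
def evalCLM (x : X) : l2 X H →L[ℂ] H :=
  LinearMap.mkContinuous
    { toFun := fun f => f x
      map_add' := fun f g => by simp [lp.coeFn_add]
      map_smul' := fun c f => by simp [lp.coeFn_smul] }
    1 (fun f => by simp only [LinearMap.coe_mk, AddHom.coe_mk, one_mul]; exact lp.norm_apply_le_norm (by norm_num) f x)

/-- insertion at a point, as a continuous linear map H → ℓ²(X,H). -/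
def singleCLM (x : X) : H →L[ℂ] l2 X H :=
  LinearMap.mkContinuous
    { toFun := fun v => lp.single 2 x v
      map_add' := fun v w => by
        apply lp.ext
        funext j
        by_cases h : j = x
        · subst h; simp [lp.single_apply_self, lp.coeFn_add]
        · simp [lp.single_apply_ne 2 x _ h, lp.coeFn_add]
      map_smul' := fun c v => by simpa using lp.single_smul 2 x v c }
    1 (fun v => by
      have : ‖(lp.single 2 x v : l2 X H)‖ = ‖v‖ := by
        simpa using lp.norm_single (p := 2) (by norm_num) (fun _ : X => v) x
      simp [this])

/-- orthogonal projection of ℓ²(X,H) onto the coordinates in a finite set. -/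
def projSet (s : Finset X) : l2 X H →L[ℂ] l2 X H :=
  ∑ y ∈ s, (singleCLM y) ∘L (evalCLM y)

section Aux

variable [CompleteSpace H]

lemma two_pos' : (0:ℝ) < (2:ℝ≥0∞).toReal := by norm_num

lemma diag_mem (η : X → H) (hη : ∀ x, ‖η x‖ = 1) (f : l2 X ℂ) :
    Memℓp (fun x => f x • η x) 2 := by
  apply memℓp_gen
  have h := (lp.memℓp f).summable two_pos'
  convert h using 2 with x
  rw [norm_smul, hη, mul_one]

/-- diagonal isometry from a field of unit vectors. -/
def diagLI (η : X → H) (hη : ∀ x, ‖η x‖ = 1) : l2 X ℂ →ₗᵢ[ℂ] l2 X H where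
  toLinearMap :=
    { toFun := fun f => ⟨fun x => f x • η x, diag_mem η hη f⟩
      map_add' := fun f g => by
        apply lp.ext; funext x
        simp only [lp.coeFn_add, Pi.add_apply]
        exact add_smul _ _ _
      map_smul' := fun c f => by
        apply lp.ext; funext x
        simp only [lp.coeFn_smul, Pi.smul_apply, RingHom.id_apply]
        exact smul_assoc c (f x) (η x) }
  norm_map' := fun f => by
    rw [lp.norm_eq_tsum_rpow two_pos', lp.norm_eq_tsum_rpow two_pos']
    congr 1
    apply tsum_congr
    intro x
    show ‖f x • η x‖ ^ (2:ℝ≥0∞).toReal = ‖f x‖ ^ (2:ℝ≥0∞).toReal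
    rw [norm_smul, hη, mul_one]

lemma diagLI_apply (η : X → H) (hη : ∀ x, ‖η x‖ = 1) (f : l2 X ℂ) (x : X) :
    (diagLI η hη f) x = f x • η x := rfl

lemma diagLI_delta (η : X → H) (hη : ∀ x, ‖η x‖ = 1) (x : X) :
    diagLI η hη (delta x) = lp.single 2 x (η x) := by
  apply lp.ext; funext y
  rw [diagLI_apply]
  by_cases h : y = x
  · subst h
    rw [lp.single_apply_self]
    show (lp.single 2 y (1:ℂ) : l2 X ℂ) y • η y = η y
    rw [lp.single_apply_self, one_smul]
  · rw [lp.single_apply_ne 2 x _ h]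
    show (lp.single 2 x (1:ℂ) : l2 X ℂ) y • η y = 0
    rw [lp.single_apply_ne 2 x _ h, zero_smul]

variable (η₀ : H)

/-- pointwise normalization of a vector field, defaulting to a fixed unit vector. -/
def unitize (ζ : l2 X H) : X → H :=
  fun x => if ζ x = 0 then η₀ else (‖ζ x‖⁻¹ : ℝ) • ζ x

lemma unitize_norm (hη₀ : ‖η₀‖ = 1) (ζ : l2 X H) (x : X) : ‖unitize η₀ ζ x‖ = 1 := by
  unfold unitize
  split_ifs with h
  · exact hη₀
  · rw [norm_smul, Real.norm_eq_abs, abs_inv, abs_norm,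
      inv_mul_cancel₀ (norm_ne_zero_iff.mpr h)]

lemma normField_mem (ζ : l2 X H) : Memℓp (fun x => (‖ζ x‖ : ℂ)) 2 := by
  apply memℓp_gen
  have h := (lp.memℓp ζ).summable two_pos'
  convert h using 2 with x
  rw [Complex.norm_real, Real.norm_eq_abs, abs_norm]

/-- the ℓ² field of norms of a vector field. -/
def normField (ζ : l2 X H) : l2 X ℂ := ⟨fun x => (‖ζ x‖ : ℂ), normField_mem ζ⟩

lemma normField_norm (ζ : l2 X H) : ‖normField ζ‖ = ‖ζ‖ := by
  rw [lp.norm_eq_tsum_rpow two_pos', lp.norm_eq_tsum_rpow two_pos']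
  congr 1
  apply tsum_congr
  intro x
  have : ‖(normField ζ) x‖ = ‖ζ x‖ := by
    show ‖((‖ζ x‖ : ℝ) : ℂ)‖ = ‖ζ x‖
    rw [Complex.norm_real, Real.norm_eq_abs, abs_norm]
  rw [this]

lemma diagLI_normField (hη₀ : ‖η₀‖ = 1) (ζ : l2 X H) :
    diagLI (unitize η₀ ζ) (unitize_norm η₀ hη₀ ζ) (normField ζ) = ζ := by
  apply lp.ext; funext x
  rw [diagLI_apply]
  show ((‖ζ x‖ : ℝ) : ℂ) • unitize η₀ ζ x = ζ x
  unfold unitize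
  split_ifs with h
  · simp [h]
  · rw [Complex.coe_smul, smul_smul,
      mul_inv_cancel₀ (norm_ne_zero_iff.mpr h), one_smul]

lemma diag_norm_le (η : X → H) (hη : ∀ x, ‖η x‖ = 1) :
    ‖(diagLI η hη).toContinuousLinearMap‖ ≤ 1 :=
  ContinuousLinearMap.opNorm_le_bound _ zero_le_one fun f => by
    rw [one_mul]
    exact le_of_eq ((diagLI η hη).norm_map f)

end Aux

/-- for any bounded operator a on ℓ²(X) ⊗ H = ℓ²(X, H) and ε > 0 there
are diagonal isometries V, W : ℓ²(X) → ℓ²(X, H) (V δ_x ∈ ℂδ_x ⊗ H) with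
(1 − ε)‖a‖ ≤ ‖W* a V‖ ≤ ‖a‖. -/
theorem stmt4 {X : Type*} {H : Type*} [NormedAddCommGroup H] [InnerProductSpace ℂ H]
    [CompleteSpace H] (hH : ∃ η : H, ‖η‖ = 1)
    (a : l2 X H →L[ℂ] l2 X H) (ε : ℝ) (hε : 0 < ε) :
    ∃ V W : l2 X ℂ →L[ℂ] l2 X H, Isometry V ∧ Isometry W ∧
      (∀ x : X, ∃ η : H, V (delta x) = lp.single 2 x η) ∧
      (∀ x : X, ∃ η : H, W (delta x) = lp.single 2 x η) ∧
      (1 - ε) * ‖a‖ ≤ ‖(ContinuousLinearMap.adjoint W) ∘L a ∘L V‖ ∧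
      ‖(ContinuousLinearMap.adjoint W) ∘L a ∘L V‖ ≤ ‖a‖ := by
  obtain ⟨η₀, hη₀⟩ := hH
  have upper : ∀ (η₁ η₂ : X → H) (h₁ : ∀ x, ‖η₁ x‖ = 1) (h₂ : ∀ x, ‖η₂ x‖ = 1),
      ‖(ContinuousLinearMap.adjoint (diagLI η₂ h₂).toContinuousLinearMap) ∘L a ∘L
        (diagLI η₁ h₁).toContinuousLinearMap‖ ≤ ‖a‖ := by
    intro η₁ η₂ h₁ h₂
    have hadj : ‖ContinuousLinearMap.adjoint (diagLI η₂ h₂).toContinuousLinearMap‖ ≤ 1 := by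
      rw [ContinuousLinearMap.adjoint.norm_map]
      exact diag_norm_le η₂ h₂
    calc ‖(ContinuousLinearMap.adjoint (diagLI η₂ h₂).toContinuousLinearMap) ∘L a ∘L
            (diagLI η₁ h₁).toContinuousLinearMap‖
        ≤ ‖ContinuousLinearMap.adjoint (diagLI η₂ h₂).toContinuousLinearMap‖ *
            ‖a ∘L (diagLI η₁ h₁).toContinuousLinearMap‖ :=
          ContinuousLinearMap.opNorm_comp_le _ _
      _ ≤ 1 * (‖a‖ * ‖(diagLI η₁ h₁).toContinuousLinearMap‖) := by
          apply mul_le_mul hadj (ContinuousLinearMap.opNorm_comp_le _ _)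
            (norm_nonneg _) zero_le_one
      _ ≤ 1 * (‖a‖ * 1) := by
          have := diag_norm_le η₁ h₁
          have ha := norm_nonneg a
          nlinarith
      _ = ‖a‖ := by ring
  by_cases htriv : (1 - ε) * ‖a‖ ≤ 0
  · refine ⟨(diagLI (fun _ : X => η₀) (fun _ => hη₀)).toContinuousLinearMap,
      (diagLI (fun _ : X => η₀) (fun _ => hη₀)).toContinuousLinearMap,
      (diagLI (fun _ : X => η₀) (fun _ => hη₀)).isometry,
      (diagLI (fun _ : X => η₀) (fun _ => hη₀)).isometry,
      fun x => ⟨η₀, diagLI_delta (fun _ : X => η₀) (fun _ => hη₀) x⟩,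
      fun x => ⟨η₀, diagLI_delta (fun _ : X => η₀) (fun _ => hη₀) x⟩,
      htriv.trans (norm_nonneg _), upper _ _ _ _⟩
  · push_neg at htriv
    have ha : 0 < ‖a‖ := by
      rcases (norm_nonneg a).lt_or_eq with h | h
      · exact h
      · exfalso; rw [← h, mul_zero] at htriv; exact lt_irrefl 0 htriv
    have hlt : (1 - ε) * ‖a‖ < ‖a‖ := by nlinarith
    obtain ⟨ζ, hζ1, hζ2⟩ := a.exists_lt_apply_of_lt_opNorm hlt
    have haζ : 0 < ‖a ζ‖ := htriv.trans hζ2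
    have haζ' : ((‖a ζ‖ : ℝ) : ℂ) ≠ 0 := Complex.ofReal_ne_zero.mpr (ne_of_gt haζ)
    set ζ₂ : l2 X H := (‖a ζ‖⁻¹ : ℂ) • (a ζ) with hζ₂def
    have hζ₂norm : ‖ζ₂‖ = 1 := by
      rw [hζ₂def, norm_smul]
      have : ‖((‖a ζ‖ : ℂ))⁻¹‖ = ‖a ζ‖⁻¹ := by
        rw [norm_inv, Complex.norm_real, Real.norm_eq_abs, abs_norm]
      rw [this, inv_mul_cancel₀ (ne_of_gt haζ)]
    set V := (diagLI (unitize η₀ ζ) (unitize_norm η₀ hη₀ ζ)).toContinuousLinearMap with hVdef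
    set W := (diagLI (unitize η₀ ζ₂) (unitize_norm η₀ hη₀ ζ₂)).toContinuousLinearMap with hWdef
    have hV : V (normField ζ) = ζ := diagLI_normField η₀ hη₀ ζ
    have hW : W (normField ζ₂) = ζ₂ := diagLI_normField η₀ hη₀ ζ₂
    set B := (ContinuousLinearMap.adjoint W) ∘L a ∘L V with hBdef
    have key : ⟪B (normField ζ), normField ζ₂⟫_ℂ = (‖a ζ‖ : ℂ) := by
      rw [hBdef, ContinuousLinearMap.comp_apply, ContinuousLinearMap.comp_apply, hV,
        ContinuousLinearMap.adjoint_inner_left, hW, hζ₂def, inner_smul_right,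
        inner_self_eq_norm_sq_to_K]
      field_simp
      rfl
    refine ⟨V, W, (diagLI (unitize η₀ ζ) (unitize_norm η₀ hη₀ ζ)).isometry,
      (diagLI (unitize η₀ ζ₂) (unitize_norm η₀ hη₀ ζ₂)).isometry,
      fun x => ⟨unitize η₀ ζ x, diagLI_delta (unitize η₀ ζ) (unitize_norm η₀ hη₀ ζ) x⟩,
      fun x => ⟨unitize η₀ ζ₂ x, diagLI_delta (unitize η₀ ζ₂) (unitize_norm η₀ hη₀ ζ₂) x⟩,
      ?_, upper _ _ _ _⟩
    have h2 : ‖a ζ‖ ≤ ‖B‖ := by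
      calc ‖a ζ‖ = ‖⟪B (normField ζ), normField ζ₂⟫_ℂ‖ := by
            rw [key, Complex.norm_real, Real.norm_eq_abs, abs_norm]
        _ ≤ ‖B (normField ζ)‖ * ‖normField ζ₂‖ := norm_inner_le_norm _ _
        _ = ‖B (normField ζ)‖ := by rw [normField_norm, hζ₂norm, mul_one]
        _ ≤ ‖B‖ := B.unit_le_opNorm _ (by rw [normField_norm]; exact hζ1.le)
    exact hζ2.le.trans h2
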